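/- Let T be a d-simplex with faces F_0,…,F_d, outward unit normals n_0,…,n_d, and barycentric coordinates λ_0,…,λ_d. Let {N_{ij}}_{1≤i<j≤d} be the basis of the antisymmetric matrices 𝕂 dual to {skw(n_i n_jᵀ)}_{1≤i<j≤d}. Then an antisymmetric-matrix-valued polynomial τ ∈ P_k(T; 𝕂) satisfies τ n|_{F_i} = 0 for i = 1,…,d if and only if τ = Σ_{1≤i<j≤d} λ_i λ_j q_{ij} N_{ij} for some scalar polynomials q_{ij} ∈ P_{k-2}(T). -/

import Mathlib

open Matrix MvPolynomial



noncomputable def psi (σ : Type*) : MvPolynomial σ ℝ →ₐ[ℝ] Polynomial (MvPolynomial σ ℝ) :=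
  aeval (fun i => Polynomial.C (X i) * Polynomial.X)

lemma psi_monomial {σ : Type*} (m : σ →₀ ℕ) (c : ℝ) :
    psi σ (monomial m c) = Polynomial.C (monomial m c) * Polynomial.X ^ (m.sum fun _ e => e) := by
  classical
  rw [psi, aeval_monomial]
  have h1 : (m.prod fun i e => (Polynomial.C (X i : MvPolynomial σ ℝ) * Polynomial.X) ^ e)
      = Polynomial.C (m.prod fun i e => (X i : MvPolynomial σ ℝ) ^ e) *
        Polynomial.X ^ (m.sum fun _ e => e) := by
    rw [Finsupp.prod, Finsupp.prod, Finsupp.sum]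
    simp_rw [mul_pow, ← Polynomial.C_pow]
    rw [Finset.prod_mul_distrib, ← map_prod, Finset.prod_pow_eq_pow_sum]
  rw [h1, monomial_eq, _root_.map_mul, Polynomial.algebraMap_apply, MvPolynomial.algebraMap_eq]
  ring

lemma psi_coeff {σ : Type*} [DecidableEq σ] (p : MvPolynomial σ ℝ) (nn : ℕ) :
    (psi σ p).coeff nn = ∑ m ∈ p.support,
      if (m.sum fun _ e => e) = nn then monomial m (coeff m p) else 0 := by
  conv_lhs => rw [p.as_sum, map_sum]
  rw [Polynomial.finset_sum_coeff]
  refine Finset.sum_congr rfl fun m _ => ?_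
  rw [psi_monomial, Polynomial.coeff_C_mul, Polynomial.coeff_X_pow, mul_ite, mul_one, mul_zero]
  simp [eq_comm]

lemma psi_coeff_totalDegree {σ : Type*} [DecidableEq σ] (p : MvPolynomial σ ℝ) (hp : p ≠ 0) :
    (psi σ p).coeff p.totalDegree ≠ 0 := by
  obtain ⟨m₀, hm₀, hdeg⟩ : ∃ m₀ ∈ p.support, (m₀.sum fun _ e => e) = p.totalDegree := by
    obtain ⟨m₀, hm₀, h⟩ := Finset.exists_mem_eq_sup p.support
      (support_nonempty.2 hp) (fun s => s.sum fun _ e => e)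
    exact ⟨m₀, hm₀, h.symm⟩
  rw [psi_coeff]
  intro h0
  have hc := congrArg (MvPolynomial.coeff m₀) h0
  rw [MvPolynomial.coeff_sum] at hc
  simp only [apply_ite (MvPolynomial.coeff m₀), MvPolynomial.coeff_monomial,
    MvPolynomial.coeff_zero] at hc
  rw [Finset.sum_eq_single m₀ (fun m _ hne => by simp [hne]) (fun h => absurd hm₀ h)] at hc
  rw [if_pos hdeg, if_pos rfl] at hc
  exact (mem_support_iff.1 hm₀) hc

lemma psi_natDegree {σ : Type*} [DecidableEq σ] (p : MvPolynomial σ ℝ) (hp : p ≠ 0) :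
    psi σ p ≠ 0 ∧ (psi σ p).natDegree = p.totalDegree := by
  have h1 := psi_coeff_totalDegree p hp
  have hne : psi σ p ≠ 0 := fun h => h1 (by simp [h])
  refine ⟨hne, le_antisymm ?_ (Polynomial.le_natDegree_of_ne_zero h1)⟩
  rw [Polynomial.natDegree_le_iff_coeff_eq_zero]
  intro nn hnn
  rw [psi_coeff]
  refine Finset.sum_eq_zero fun m hm => ?_
  rw [if_neg]
  intro h
  exact absurd (h ▸ MvPolynomial.le_totalDegree hm) (not_le.2 hnn)

lemma totalDegree_mul_eq' {σ : Type*} (f g : MvPolynomial σ ℝ) (hf : f ≠ 0) (hg : g ≠ 0) :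
    (f * g).totalDegree = f.totalDegree + g.totalDegree := by
  classical
  obtain ⟨hf', hfd⟩ := psi_natDegree f hf
  obtain ⟨hg', hgd⟩ := psi_natDegree g hg
  have hfg : f * g ≠ 0 := mul_ne_zero hf hg
  obtain ⟨_, hfgd⟩ := psi_natDegree (f * g) hfg
  rw [← hfd, ← hgd, ← hfgd, _root_.map_mul, Polynomial.natDegree_mul hf' hg']



section helpers
lemma eq_C_of_deg0 {σ : Type*} (p : MvPolynomial σ ℝ) (h : p.totalDegree = 0) :
    ∃ r : ℝ, p = C r := by
  classical
  refine ⟨coeff 0 p, ?_⟩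
  apply MvPolynomial.ext
  intro m
  rw [MvPolynomial.coeff_C]
  by_cases hm : (0 : σ →₀ ℕ) = m
  · rw [if_pos hm, ← hm]
  · rw [if_neg hm]
    by_contra hc
    have hmem : m ∈ p.support := MvPolynomial.mem_support_iff.2 hc
    have := (MvPolynomial.totalDegree_eq_zero_iff σ p).1 h m hmem
    exact hm (by ext x; simp [this x])
end helpers




lemma irred_of_deg1 {σ : Type*} (p : MvPolynomial σ ℝ) (h : p.totalDegree = 1) :
    Irreducible p := by
  have hne : p ≠ 0 := fun h0 => by simp [h0] at h
  constructor
  · intro hu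
    obtain ⟨w, hw⟩ := isUnit_iff_exists_inv.1 hu
    have hw0 : w ≠ 0 := fun h0 => by simp [h0] at hw
    have := totalDegree_mul_eq' p w hne hw0
    rw [hw, totalDegree_one, h] at this
    omega
  · intro a b hab
    have ha0 : a ≠ 0 := fun h0 => hne (by rw [hab, h0, zero_mul])
    have hb0 : b ≠ 0 := fun h0 => hne (by rw [hab, h0, mul_zero])
    have hd := totalDegree_mul_eq' a b ha0 hb0
    rw [← hab, h] at hd
    have hCunit : ∀ r : ℝ, r ≠ 0 → IsUnit (C r : MvPolynomial σ ℝ) := fun r hr =>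
      isUnit_iff_exists_inv.2 ⟨C r⁻¹, by rw [← C_mul, mul_inv_cancel₀ hr, C_1]⟩
    rcases Nat.eq_zero_or_pos a.totalDegree with h0 | h0
    · obtain ⟨r, rfl⟩ := eq_C_of_deg0 a h0
      left
      exact hCunit r (fun hr => ha0 (by rw [hr, map_zero]))
    · right
      have hb' : b.totalDegree = 0 := by omega
      obtain ⟨r, rfl⟩ := eq_C_of_deg0 b hb'
      exact hCunit r (fun hr => hb0 (by rw [hr, map_zero]))

lemma prime_of_deg1 {σ : Type*} (p : MvPolynomial σ ℝ) (h : p.totalDegree = 1) :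
    Prime p :=
  (UniqueFactorizationMonoid.irreducible_iff_prime).1 (irred_of_deg1 p h)



lemma dvd_of_vanish {d : ℕ} (v : Fin d → ℝ) (e : Fin d) (hve : v e ≠ 0) (c : ℝ)
    (l p : MvPolynomial (Fin d) ℝ)
    (hl : ∀ x, eval x l = c + v ⬝ᵥ x)
    (hp : ∀ x, eval x l = 0 → eval x p = 0) : l ∣ p := by
  classical
  set σ' := {b : Fin d // b ≠ e} with hσ'
  let φ : MvPolynomial (Fin d) ℝ ≃ₐ[ℝ] Polynomial (MvPolynomial σ' ℝ) :=
    (renameEquiv ℝ (Equiv.optionSubtypeNe e).symm).trans (optionEquivLeft ℝ σ')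
  have hφXe : φ (X e) = Polynomial.X := by
    simp only [φ, AlgEquiv.trans_apply, renameEquiv_apply, rename_X,
      Equiv.optionSubtypeNe_symm_self, optionEquivLeft_X_none]
  have hφXne : ∀ (b : Fin d) (h : b ≠ e), φ (X b) = Polynomial.C (X ⟨b, h⟩) := by
    intro b h
    simp only [φ, AlgEquiv.trans_apply, renameEquiv_apply, rename_X,
      Equiv.optionSubtypeNe_symm_of_ne h, optionEquivLeft_X_some]
  have hφC : ∀ r : ℝ, φ (C r) = Polynomial.C (C r) := by
    intro r
    simp only [φ, AlgEquiv.trans_apply, renameEquiv_apply, rename_C, optionEquivLeft_C]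
  -- explicit form of l
  have lC : l = C c + ∑ b, C (v b) * X b := by
    apply MvPolynomial.funext
    intro x
    simp [hl x, dotProduct]
  -- φ l
  set s : MvPolynomial σ' ℝ := C c + ∑ b : σ', C (v b.1) * X b with hs
  have hφl : φ l = Polynomial.C s + Polynomial.C (C (v e)) * Polynomial.X := by
    rw [lC, map_add, hφC, map_sum]
    have hsplit : (∑ b, φ (C (v b) * X b)) =
        φ (C (v e) * X e) + ∑ b ∈ Finset.univ.erase e, φ (C (v b) * X b) :=
      (Finset.add_sum_erase _ _ (Finset.mem_univ e)).symm
    rw [hsplit]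
    have h1 : φ (C (v e) * X e) = Polynomial.C (C (v e)) * Polynomial.X := by
      rw [_root_.map_mul, hφC, hφXe]
    have h2 : (∑ b ∈ Finset.univ.erase e, φ (C (v b) * X b)) =
        Polynomial.C (∑ b : σ', C (v b.1) * X b) := by
      rw [Finset.sum_subtype (p := fun b => b ≠ e) (Finset.univ.erase e)
        (fun x => by simp) (fun b => φ (C (v b) * X b)), map_sum]
      refine Finset.sum_congr rfl fun b _ => ?_
      rw [_root_.map_mul, hφC, hφXne b.1 b.2, ← _root_.map_mul]
    rw [h1, h2, hs, map_add]
    ring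
  -- monic divisor
  set s' : MvPolynomial σ' ℝ := C (v e)⁻¹ * s with hs'
  set M : Polynomial (MvPolynomial σ' ℝ) := Polynomial.C (C (v e)⁻¹) * φ l with hM
  have hMX : M = Polynomial.X + Polynomial.C s' := by
    rw [hM, hφl, hs']
    have : (C (v e)⁻¹ : MvPolynomial σ' ℝ) * C (v e) = 1 := by
      rw [← _root_.map_mul, inv_mul_cancel₀ hve, MvPolynomial.C_1]
    rw [mul_add, ← _root_.map_mul, ← mul_assoc, ← _root_.map_mul, this, Polynomial.C_1, one_mul]
    ring
  have hMonic : M.Monic := hMX ▸ Polynomial.monic_X_add_C s'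
  set r : Polynomial (MvPolynomial σ' ℝ) := Polynomial.modByMonic (φ p) M with hr
  set q' : Polynomial (MvPolynomial σ' ℝ) := Polynomial.divByMonic (φ p) M with hq'
  have heq : φ p = M * q' + r := by
    rw [hr, hq', eq_comm, add_comm]
    exact Polynomial.modByMonic_add_div (φ p) M
  have hrdeg : r.degree < 1 := by
    calc r.degree < M.degree := Polynomial.degree_modByMonic_lt (φ p) hMonic
    _ = 1 := by rw [hMX, Polynomial.degree_X_add_C]
  have hrC : r = Polynomial.C (r.coeff 0) :=
    Polynomial.eq_C_of_degree_le_zero (by exact Nat.WithBot.lt_one_iff_le_zero.1 hrdeg)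
  -- show r = 0 by evaluation
  have hr0 : r.coeff 0 = 0 := by
    apply MvPolynomial.funext (q := 0)
    intro y
    rw [map_zero]
    set x₀ : Fin d → ℝ := fun b => if h : b = e then 0 else y ⟨b, h⟩ with hx₀
    set t : ℝ := -(c + v ⬝ᵥ x₀) / v e with ht
    set x : Fin d → ℝ := Function.update x₀ e t with hx
    have hxb : ∀ (b : Fin d) (h : b ≠ e), x b = y ⟨b, h⟩ := by
      intro b h
      rw [hx, Function.update_of_ne h, hx₀]
      simp [h]
    have hxe : x e = t := by rw [hx]; simp
    have hxl : eval x l = 0 := by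
      rw [hl x]
      have hdot : v ⬝ᵥ x = v ⬝ᵥ x₀ + v e * t := by
        unfold dotProduct
        have : ∀ b : Fin d, v b * x b = v b * x₀ b + (if b = e then v e * t else 0) := by
          intro b
          by_cases h : b = e
          · subst h; rw [hxe, if_pos rfl, hx₀]; simp
          · rw [hxb b h, if_neg h, hx₀]; simp [h]
        simp_rw [this, Finset.sum_add_distrib, Finset.sum_ite_eq' Finset.univ e]
        simp
      rw [hdot, ht, mul_div_cancel₀ _ hve]
      ring
    have hxp : eval x p = 0 := hp x hxl
    -- the evaluation ring hom
    set E : Polynomial (MvPolynomial σ' ℝ) →+* ℝ :=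
      Polynomial.eval₂RingHom (MvPolynomial.eval y) (x e) with hE
    have hEφ : ∀ pp : MvPolynomial (Fin d) ℝ, E (φ pp) = eval x pp := by
      intro pp
      induction pp using MvPolynomial.induction_on with
      | C r => rw [hφC]; simp [hE]
      | add f g hf hg => rw [map_add, map_add, map_add, hf, hg]
      | mul_X f b hf =>
          rw [_root_.map_mul, _root_.map_mul, _root_.map_mul, hf, MvPolynomial.eval_X]
          congr 1
          by_cases h : b = e
          · subst h
            rw [hφXe]
            simp [hE]
          · rw [hφXne b h, hxb b h]
            simp [hE]
    have hEl : E (φ l) = 0 := by rw [hEφ]; exact hxl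
    have hEM : E M = 0 := by rw [hM, _root_.map_mul, hEl, mul_zero]
    have := congrArg E heq
    rw [hEφ, hxp, map_add, _root_.map_mul, hEM, zero_mul, zero_add, hrC] at this
    rw [hE] at this
    simpa using this.symm
  have hφpd : φ l ∣ φ p := by
    refine Dvd.intro (Polynomial.C (C (v e)⁻¹) * q') ?_
    rw [heq, hrC, hr0, map_zero, add_zero, hM]
    ring
  obtain ⟨w, hw⟩ := hφpd
  refine ⟨φ.symm w, ?_⟩
  have hsymm := congrArg φ.symm hw
  rwa [AlgEquiv.symm_apply_apply, _root_.map_mul, AlgEquiv.symm_apply_apply] at hsymm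




theorem bubble_characterization_antisym (d k : ℕ) (hd : 1 ≤ d)
    (n : Fin d → Fin d → ℝ) (hn : LinearIndependent ℝ n)
    (lam : Fin d → MvPolynomial (Fin d) ℝ)
    (hlamdeg : ∀ i, (lam i).totalDegree = 1)
    (hlamgrad : ∀ i, ∃ c a : ℝ, a ≠ 0 ∧
      ∀ x : Fin d → ℝ, eval x (lam i) = c + a * (n i ⬝ᵥ x))
    (N : Fin d → Fin d → Matrix (Fin d) (Fin d) ℝ)
    (hNskw : ∀ i j, (N i j)ᵀ = - N i j)
    (hNdual : ∀ i j l m : Fin d, i < j → l < m →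
      ∑ a : Fin d, ∑ b : Fin d, N i j a b *
          ((1/2 : ℝ) • (vecMulVec (n l) (n m) - (vecMulVec (n l) (n m))ᵀ)) a b
        = if i = l ∧ j = m then 1 else 0)
    (τ : Matrix (Fin d) (Fin d) (MvPolynomial (Fin d) ℝ))
    (hτdeg : ∀ a b, (τ a b).totalDegree ≤ k)
    (hτskw : ∀ a b, τ b a = - τ a b) :
    (∀ i : Fin d, ∀ x : Fin d → ℝ, eval x (lam i) = 0 →
        ∀ a, ∑ b, eval x (τ a b) * n i b = 0) ↔
    (∃ q : Fin d → Fin d → MvPolynomial (Fin d) ℝ,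
      (∀ i j, (q i j).totalDegree ≤ k - 2) ∧
      ∀ a b, τ a b = ∑ i : Fin d, ∑ j ∈ Finset.univ.filter (fun j => i < j),
        lam i * lam j * q i j * C (N i j a b)) := by
  classical
  set G : Matrix (Fin d) (Fin d) ℝ := Matrix.of n with hGdef
  have hGapp : ∀ i j, G i j = n i j := fun i j => rfl
  have hGu : IsUnit G := Matrix.linearIndependent_rows_iff_isUnit.mp hn
  have hdet : IsUnit G.det := (Matrix.isUnit_iff_isUnit_det G).mp hGu
  have hGl : G⁻¹ * G = 1 := Matrix.nonsing_inv_mul G hdet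
  have hdetT : IsUnit Gᵀ.det := by rwa [Matrix.det_transpose]
  have hGTr : Gᵀ * Gᵀ⁻¹ = 1 := Matrix.mul_nonsing_inv _ hdetT
  have hGMG : ∀ (M : Matrix (Fin d) (Fin d) ℝ) (l m : Fin d),
      (G * M * Gᵀ) l m = ∑ a, ∑ b, n l a * M a b * n m b := by
    intro M l m
    rw [Matrix.mul_apply]
    simp_rw [Matrix.mul_apply, Matrix.transpose_apply, Finset.sum_mul]
    rw [Finset.sum_comm]
    exact Finset.sum_congr rfl fun a _ => Finset.sum_congr rfl fun b _ => by
      simp only [hGapp]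
  have hNab : ∀ i j a b, N i j a b = - N i j b a := by
    intro i j a b
    have h := congrFun (congrFun (hNskw i j) b) a
    simpa [Matrix.transpose_apply, Matrix.neg_apply] using h
  have hswap : ∀ (M : Matrix (Fin d) (Fin d) ℝ), (∀ a b, M a b = - M b a) → ∀ l m,
      (∑ a, ∑ b, n l a * M a b * n m b) = - ∑ a, ∑ b, n m a * M a b * n l b := by
    intro M hM l m
    calc (∑ a, ∑ b, n l a * M a b * n m b) = ∑ b, ∑ a, n l a * M a b * n m b :=
          Finset.sum_comm
      _ = ∑ b, ∑ a, -(n m b * M b a * n l a) := by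
          refine Finset.sum_congr rfl fun b _ => Finset.sum_congr rfl fun a _ => ?_
          rw [hM a b]; ring
      _ = - ∑ b, ∑ a, n m b * M b a * n l a := by
          simp [Finset.sum_neg_distrib]
      _ = - ∑ a, ∑ b, n m a * M a b * n l b := rfl
  have hSform : ∀ i j l m, (∑ a : Fin d, ∑ b : Fin d, N i j a b *
        ((1/2 : ℝ) • (vecMulVec (n l) (n m) - (vecMulVec (n l) (n m))ᵀ)) a b)
      = ∑ a, ∑ b, n l a * N i j a b * n m b := by
    intro i j l m
    have hT : (∑ a, ∑ b, n l b * N i j a b * n m a)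
        = - ∑ a, ∑ b, n l a * N i j a b * n m b := by
      calc (∑ a, ∑ b, n l b * N i j a b * n m a)
          = ∑ a, ∑ b, n m a * N i j a b * n l b :=
            Finset.sum_congr rfl fun a _ => Finset.sum_congr rfl fun b _ => by ring
        _ = - ∑ a, ∑ b, n l a * N i j a b * n m b := hswap (N i j) (hNab i j) m l
    calc (∑ a : Fin d, ∑ b : Fin d, N i j a b *
          ((1/2 : ℝ) • (vecMulVec (n l) (n m) - (vecMulVec (n l) (n m))ᵀ)) a b)
        = ∑ a, ∑ b, ((1/2:ℝ) * (n l a * N i j a b * n m b)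
            - (1/2:ℝ) * (n l b * N i j a b * n m a)) := by
          refine Finset.sum_congr rfl fun a _ => Finset.sum_congr rfl fun b _ => ?_
          simp only [Matrix.smul_apply, Matrix.sub_apply, Matrix.vecMulVec_apply,
            Matrix.transpose_apply, smul_eq_mul]
          ring
      _ = (1/2:ℝ) * (∑ a, ∑ b, n l a * N i j a b * n m b)
          - (1/2:ℝ) * (∑ a, ∑ b, n l b * N i j a b * n m a) := by
          simp [Finset.sum_sub_distrib, Finset.mul_sum]
      _ = ∑ a, ∑ b, n l a * N i j a b * n m b := by rw [hT]; ring
  have hNfull : ∀ i j l m, i < j → (∑ a, ∑ b, n l a * N i j a b * n m b)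
      = (if l = i ∧ m = j then (1:ℝ) else 0) - (if l = j ∧ m = i then 1 else 0) := by
    intro i j l m hij
    rcases lt_trichotomy l m with hlm | hlm | hlm
    · have hdd := hNdual i j l m hij hlm
      rw [hSform] at hdd
      rw [hdd]
      have h2 : ¬(l = j ∧ m = i) := by
        rintro ⟨rfl, rfl⟩
        exact lt_irrefl _ (hij.trans hlm)
      rw [if_neg h2, sub_zero]
      by_cases h1 : i = l ∧ j = m
      · rw [if_pos h1, if_pos ⟨h1.1.symm, h1.2.symm⟩]
      · rw [if_neg h1, if_neg (fun h => h1 ⟨h.1.symm, h.2.symm⟩)]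
    · subst hlm
      have h0 := hswap (N i j) (hNab i j) l l
      have hS0 : (∑ a, ∑ b, n l a * N i j a b * n l b) = 0 := by linarith
      rw [hS0]
      have h1 : ¬(l = i ∧ l = j) := by
        rintro ⟨rfl, h⟩
        exact absurd h (ne_of_lt hij)
      rw [if_neg h1, if_neg (fun h => h1 ⟨h.2, h.1⟩), sub_zero]
    · have hdd := hNdual i j m l hij hlm
      rw [hSform] at hdd
      have hsw := hswap (N i j) (hNab i j) l m
      rw [hsw, hdd]
      have h1 : ¬(l = i ∧ m = j) := by
        rintro ⟨rfl, rfl⟩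
        exact lt_irrefl _ (hij.trans hlm)
      rw [if_neg h1, zero_sub]
      by_cases h2 : i = m ∧ j = l
      · rw [if_pos h2, if_pos ⟨h2.2.symm, h2.1.symm⟩]
      · rw [if_neg h2, if_neg (fun h => h2 ⟨h.2.symm, h.1.symm⟩), neg_zero]
  set Eij : Fin d → Fin d → Matrix (Fin d) (Fin d) ℝ := fun i j =>
    Matrix.of fun a b =>
      (if a = i ∧ b = j then (1:ℝ) else 0) - (if a = j ∧ b = i then 1 else 0) with hEijdef
  have hGNG : ∀ i j, i < j → G * N i j * Gᵀ = Eij i j := by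
    intro i j hij
    ext l m
    rw [hGMG, hNfull i j l m hij]
    rfl
  have hK3 : ∀ i j l, i < j → l ≠ i → l ≠ j → ∀ a, (∑ b, N i j a b * n l b) = 0 := by
    intro i j l hij hli hlj a
    have hmat : N i j * Gᵀ = G⁻¹ * Eij i j := by
      calc N i j * Gᵀ = (G⁻¹ * G) * (N i j * Gᵀ) := by rw [hGl, one_mul]
        _ = G⁻¹ * (G * N i j * Gᵀ) := by
            rw [Matrix.mul_assoc G⁻¹ G (N i j * Gᵀ), ← Matrix.mul_assoc G (N i j) Gᵀ]
        _ = G⁻¹ * Eij i j := by rw [hGNG i j hij]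
    have hent := congrFun (congrFun hmat a) l
    rw [Matrix.mul_apply, Matrix.mul_apply] at hent
    have hL : (∑ b, N i j a b * Gᵀ b l) = ∑ b, N i j a b * n l b :=
      Finset.sum_congr rfl fun b _ => by rw [Matrix.transpose_apply, hGapp]
    rw [hL] at hent
    rw [hent]
    refine Finset.sum_eq_zero fun b _ => ?_
    have hz : Eij i j b l = 0 := by
      simp only [hEijdef, Matrix.of_apply]
      rw [if_neg (fun h => hlj h.2), if_neg (fun h => hli h.2), sub_zero]
    rw [hz, mul_zero]
  have hK2 : ∀ (M : Matrix (Fin d) (Fin d) ℝ), (∀ a b, M b a = - M a b) → ∀ a b,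
      M a b = ∑ i, ∑ j ∈ Finset.univ.filter (fun j => i < j),
        (∑ a', ∑ b', n i a' * M a' b' * n j b') * N i j a b := by
    intro M hM a b
    set P : Matrix (Fin d) (Fin d) ℝ := G * M * Gᵀ with hPdef
    have hPapp : ∀ l m, P l m = ∑ a', ∑ b', n l a' * M a' b' * n m b' := fun l m => hGMG M l m
    have hPanti : ∀ l m, P m l = - P l m := by
      intro l m
      rw [hPapp, hPapp]
      exact hswap M (fun a' b' => hM b' a') m l
    have hdecomp : P = ∑ i, ∑ j ∈ Finset.univ.filter (fun j => i < j), P i j • Eij i j := by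
      ext l m
      simp only [Matrix.sum_apply, Matrix.smul_apply, smul_eq_mul, hEijdef, Matrix.of_apply]
      have hsum1 : (∑ i, ∑ j ∈ Finset.univ.filter (fun j => i < j),
          P i j * (if l = i ∧ m = j then (1:ℝ) else 0)) = if l < m then P l m else 0 := by
        rw [Finset.sum_eq_single l]
        · simp only [true_and]
          simp_rw [mul_ite, mul_one, mul_zero]
          rw [Finset.sum_ite_eq]
          simp [Finset.mem_filter]
        · intro i _ hi
          exact Finset.sum_eq_zero fun j _ => by
            rw [if_neg (fun h => hi h.1.symm), mul_zero]
        · intro h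
          exact absurd (Finset.mem_univ l) h
      have hsum2 : (∑ i, ∑ j ∈ Finset.univ.filter (fun j => i < j),
          P i j * (if l = j ∧ m = i then (1:ℝ) else 0)) = if m < l then P m l else 0 := by
        rw [Finset.sum_eq_single m]
        · simp only [and_true]
          simp_rw [mul_ite, mul_one, mul_zero]
          rw [Finset.sum_ite_eq]
          simp [Finset.mem_filter]
        · intro i _ hi
          exact Finset.sum_eq_zero fun j _ => by
            rw [if_neg (fun h => hi h.2.symm), mul_zero]
        · intro h
          exact absurd (Finset.mem_univ m) h
      simp_rw [mul_sub]
      simp_rw [Finset.sum_sub_distrib]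
      rw [hsum1, hsum2]
      rcases lt_trichotomy l m with h | h | h
      · rw [if_pos h, if_neg (lt_asymm h)]
        ring
      · subst h
        rw [if_neg (lt_irrefl l)]
        have := hPanti l l
        linarith
      · rw [if_neg (lt_asymm h), if_pos h, hPanti m l]
        ring
    have hmain : G * M * Gᵀ
        = G * (∑ i, ∑ j ∈ Finset.univ.filter (fun j => i < j), P i j • N i j) * Gᵀ := by
      rw [Finset.mul_sum, Finset.sum_mul]
      calc G * M * Gᵀ = P := hPdef.symm
        _ = ∑ i, ∑ j ∈ Finset.univ.filter (fun j => i < j), P i j • Eij i j := hdecomp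
        _ = ∑ i, (∑ j ∈ Finset.univ.filter (fun j => i < j), G * (P i j • N i j)) * Gᵀ := by
            refine Finset.sum_congr rfl fun i _ => ?_
            rw [Finset.sum_mul]
            refine Finset.sum_congr rfl fun j hj => ?_
            have hij : i < j := (Finset.mem_filter.1 hj).2
            rw [Matrix.mul_smul, Matrix.smul_mul, hGNG i j hij]
        _ = ∑ i, (G * ∑ j ∈ Finset.univ.filter (fun j => i < j), P i j • N i j) * Gᵀ := by
            refine Finset.sum_congr rfl fun i _ => ?_
            rw [Finset.mul_sum]
    have hMM : M = ∑ i, ∑ j ∈ Finset.univ.filter (fun j => i < j), P i j • N i j := by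
      have hassoc : ∀ A : Matrix (Fin d) (Fin d) ℝ,
          G⁻¹ * (G * A * Gᵀ) * Gᵀ⁻¹ = A := by
        intro A
        have h1 : G⁻¹ * (G * A * Gᵀ) * Gᵀ⁻¹ = (G⁻¹ * G) * A * (Gᵀ * Gᵀ⁻¹) := by
          noncomm_ring
        rw [h1, hGl, hGTr, one_mul, mul_one]
      calc M = G⁻¹ * (G * M * Gᵀ) * Gᵀ⁻¹ := (hassoc M).symm
        _ = G⁻¹ * (G * (∑ i, ∑ j ∈ Finset.univ.filter (fun j => i < j), P i j • N i j) * Gᵀ)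
            * Gᵀ⁻¹ := by rw [hmain]
        _ = _ := hassoc _
    have hent := congrFun (congrFun hMM a) b
    simp only [Matrix.sum_apply, Matrix.smul_apply, smul_eq_mul] at hent
    rw [hent]
    exact Finset.sum_congr rfl fun i _ => Finset.sum_congr rfl fun j _ => by rw [hPapp]
  have hlamne : ∀ i, lam i ≠ 0 := by
    intro i h0
    have := hlamdeg i
    rw [h0, totalDegree_zero] at this
    omega
  have hdvd : ∀ i (pp : MvPolynomial (Fin d) ℝ),
      (∀ x, eval x (lam i) = 0 → eval x pp = 0) → lam i ∣ pp := by
    intro i pp hvan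
    obtain ⟨c, a, ha, hrep⟩ := hlamgrad i
    obtain ⟨e, he⟩ := Function.ne_iff.1 (hn.ne_zero i)
    refine dvd_of_vanish (fun b => a * n i b) e (mul_ne_zero ha (by simpa using he)) c
      (lam i) pp ?_ hvan
    intro x
    rw [hrep x]
    simp [dotProduct, Finset.mul_sum, mul_assoc]
  have hnotdvd : ∀ i j, i ≠ j → ¬ lam i ∣ lam j := by
    intro i j hij hdv
    obtain ⟨u, hu⟩ := hdv
    have hu0 : u ≠ 0 := fun h0 => hlamne j (by rw [hu, h0, mul_zero])
    have hdeg1 : (lam j).totalDegree = (lam i).totalDegree + u.totalDegree := by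
      rw [hu, totalDegree_mul_eq' _ _ (hlamne i) hu0]
    rw [hlamdeg i, hlamdeg j] at hdeg1
    obtain ⟨r, rfl⟩ := eq_C_of_deg0 u (by omega)
    have hr0 : r ≠ 0 := fun h0 => hu0 (by rw [h0, map_zero])
    obtain ⟨ci, ai, hai, hri⟩ := hlamgrad i
    obtain ⟨cj, aj, haj, hrj⟩ := hlamgrad j
    have hev : ∀ x, cj + aj * (n j ⬝ᵥ x) = (ci + ai * (n i ⬝ᵥ x)) * r := by
      intro x
      have h1 := congrArg (eval x) hu
      rw [_root_.map_mul, eval_C, hri, hrj] at h1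
      exact h1
    have h0 : cj = ci * r := by
      have := hev 0
      simpa [dotProduct] using this
    have hbasis : ∀ b, aj * n j b = ai * r * n i b := by
      intro b
      have h1 := hev (Pi.single b 1)
      have hds : ∀ v : Fin d → ℝ, v ⬝ᵥ Pi.single b 1 = v b := by
        intro v
        simp [dotProduct, Pi.single_apply]
      rw [hds, hds] at h1
      linear_combination h1 - h0
    set g : Fin d → ℝ := fun l => if l = i then ai * r else if l = j then -aj else 0 with hgdef
    have hgsum : (∑ l, g l • n l) = 0 := by
      funext cc
      rw [Finset.sum_apply]
      simp only [Pi.smul_apply, smul_eq_mul]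
      have hterm : ∀ l, g l * n l cc =
          (if l = i then ai * r * n i cc else 0) + (if l = j then -aj * n j cc else 0) := by
        intro l
        simp only [hgdef]
        split_ifs with h1 h2 h3
        · exact absurd (h1.symm.trans h2) hij
        · rw [h1]; ring
        · rw [h3]; ring
        · ring
      simp_rw [hterm]
      rw [Finset.sum_add_distrib, Finset.sum_ite_eq' Finset.univ i, Finset.sum_ite_eq' Finset.univ j]
      simp only [Finset.mem_univ, if_pos]
      have := hbasis cc
      simp only [Pi.zero_apply]
      linarith
    have hg0 := Fintype.linearIndependent_iff.1 hn g hgsum j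
    rw [hgdef] at hg0
    simp only [if_neg (fun h : j = i => hij h.symm), if_pos rfl, if_true] at hg0
    exact haj (by linarith)
  constructor
  · -- forward
    intro H
    set p : Fin d → Fin d → MvPolynomial (Fin d) ℝ :=
      fun i j => ∑ a, ∑ b, C (n i a) * τ a b * C (n j b) with hpdef
    have hpeval : ∀ i j x, eval x (p i j) = ∑ a, ∑ b, n i a * eval x (τ a b) * n j b := by
      intro i j x
      rw [hpdef]
      simp [map_sum]
    have hpdeg : ∀ i j, (p i j).totalDegree ≤ k := by
      intro i j
      refine le_trans (totalDegree_finset_sum _ _) (Finset.sup_le fun a _ => ?_)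
      refine le_trans (totalDegree_finset_sum _ _) (Finset.sup_le fun b _ => ?_)
      refine le_trans (totalDegree_mul _ _) ?_
      rw [totalDegree_C, add_zero]
      refine le_trans (totalDegree_mul _ _) ?_
      rw [totalDegree_C, zero_add]
      exact hτdeg a b
    have hvan1 : ∀ i j x, eval x (lam i) = 0 → eval x (p i j) = 0 := by
      intro i j x hx
      rw [hpeval]
      rw [Finset.sum_comm]
      refine Finset.sum_eq_zero fun b _ => ?_
      have hrow := H i x hx b
      have : (∑ a, n i a * eval x (τ a b) * n j b)
          = - (n j b * ∑ a, eval x (τ b a) * n i a) := by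
        rw [Finset.mul_sum, ← Finset.sum_neg_distrib]
        refine Finset.sum_congr rfl fun a _ => ?_
        have hskw := congrArg (eval x) (hτskw b a)
        rw [map_neg] at hskw
        rw [hskw]
        ring
      rw [this, hrow, mul_zero, neg_zero]
    have hvan2 : ∀ i j x, eval x (lam j) = 0 → eval x (p i j) = 0 := by
      intro i j x hx
      rw [hpeval]
      refine Finset.sum_eq_zero fun a _ => ?_
      have hrow := H j x hx a
      have : (∑ b, n i a * eval x (τ a b) * n j b)
          = n i a * ∑ b, eval x (τ a b) * n j b := by
        rw [Finset.mul_sum]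
        exact Finset.sum_congr rfl fun b _ => by ring
      rw [this, hrow, mul_zero]
    have hfact : ∀ i j, i < j → ∃ q0 : MvPolynomial (Fin d) ℝ,
        p i j = lam i * lam j * q0 ∧ q0.totalDegree ≤ k - 2 := by
      intro i j hij
      have hdvd_i : lam i ∣ p i j := hdvd i _ (hvan1 i j)
      have hdvd_j : lam j ∣ p i j := hdvd j _ (hvan2 i j)
      obtain ⟨s, hsEq⟩ := hdvd_i
      have hprime_j : Prime (lam j) := prime_of_deg1 _ (hlamdeg j)
      have hjdvd : lam j ∣ lam i * s := hsEq ▸ hdvd_j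
      rcases hprime_j.2.2 _ _ hjdvd with hca | hca
      · exact absurd hca (hnotdvd j i (ne_of_gt hij))
      · obtain ⟨q0, rfl⟩ := hca
        refine ⟨q0, by rw [hsEq]; ring, ?_⟩
        by_cases hq0 : q0 = 0
        · rw [hq0, totalDegree_zero]
          omega
        · have hdg : (p i j).totalDegree = 1 + (1 + q0.totalDegree) := by
            rw [hsEq, totalDegree_mul_eq' _ _ (hlamne i)
              (mul_ne_zero (hlamne j) hq0), hlamdeg i,
              totalDegree_mul_eq' _ _ (hlamne j) hq0, hlamdeg j]
          have := hpdeg i j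
          omega
    refine ⟨fun i j => if h : i < j then (hfact i j h).choose else 0, ?_, ?_⟩
    · intro i j
      by_cases h : i < j
      · simp only [dif_pos h]
        exact ((hfact i j h).choose_spec).2
      · simp only [dif_neg h, totalDegree_zero]
        omega
    · intro a b
      apply MvPolynomial.funext
      intro x
      have hM : ∀ a' b', eval x (τ b' a') = - eval x (τ a' b') := by
        intro a' b'
        have := congrArg (eval x) (hτskw a' b')
        rwa [map_neg] at this
      have hexp := hK2 (fun a' b' => eval x (τ a' b')) hM a b
      rw [map_sum]
      rw [hexp]
      refine Finset.sum_congr rfl fun i _ => ?_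
      rw [map_sum]
      refine Finset.sum_congr rfl fun j hj => ?_
      have hij : i < j := (Finset.mem_filter.1 hj).2
      simp only [dif_pos hij]
      have hspec := ((hfact i j hij).choose_spec).1
      have := congrArg (eval x) hspec
      rw [hpeval] at this
      rw [_root_.map_mul, eval_C, ← this]
  · -- reverse
    rintro ⟨q, hq, hqid⟩ i x hx a
    have hterm : ∀ b, eval x (τ a b) = ∑ i', ∑ j' ∈ Finset.univ.filter (fun j => i' < j),
        (eval x (lam i') * eval x (lam j') * eval x (q i' j')) * N i' j' a b := by
      intro b
      rw [hqid a b, map_sum]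
      refine Finset.sum_congr rfl fun i' _ => ?_
      rw [map_sum]
      refine Finset.sum_congr rfl fun j' _ => ?_
      rw [_root_.map_mul, _root_.map_mul, _root_.map_mul, eval_C]
    calc (∑ b, eval x (τ a b) * n i b)
        = ∑ b, ∑ i', ∑ j' ∈ Finset.univ.filter (fun j => i' < j),
            ((eval x (lam i') * eval x (lam j') * eval x (q i' j')) * N i' j' a b) * n i b := by
          refine Finset.sum_congr rfl fun b _ => ?_
          rw [hterm b, Finset.sum_mul]
          refine Finset.sum_congr rfl fun i' _ => ?_
          rw [Finset.sum_mul]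
      _ = ∑ i', ∑ j' ∈ Finset.univ.filter (fun j => i' < j),
            (eval x (lam i') * eval x (lam j') * eval x (q i' j'))
              * (∑ b, N i' j' a b * n i b) := by
          rw [Finset.sum_comm]
          refine Finset.sum_congr rfl fun i' _ => ?_
          rw [Finset.sum_comm]
          refine Finset.sum_congr rfl fun j' _ => ?_
          rw [Finset.mul_sum]
          refine Finset.sum_congr rfl fun b _ => by ring
      _ = 0 := by
          refine Finset.sum_eq_zero fun i' _ => Finset.sum_eq_zero fun j' hj' => ?_
          have hij' : i' < j' := (Finset.mem_filter.1 hj').2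
          by_cases hii : i = i'
          · rw [← hii, hx]
            ring
          · by_cases hij : i = j'
            · rw [← hij, hx]
              ring
            · rw [hK3 i' j' i hij' hii hij a, mul_zero]
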